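/- q-norm expansion of swap walks: if X is a (q,γ)-product d-partite complex, then for all disjoint coordinate subsets S, T ⊆ [d], the swap walk satisfies ‖A_{S,T} − Π_{S,T}‖_{q→q} ≤ |S||T|γ and ‖A_{S,T} − Π_{S,T}‖_{q'→q'} ≤ |S||T|γ, where q' = q/(q−1). -/

import Mathlib

open Finset BigOperators

/-- Conditional expectation operator `E_T` on a `d`-partite space:
`E_T f (x) = E[f(y) | y_T = x_T]` under the (finitely supported) measure `μ`. -/
noncomputable def projE {d : ℕ} {Ω : Type} [Fintype Ω] [DecidableEq Ω]
    (μ : (Fin d → Ω) → ℝ) (T : Finset (Fin d))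
    (f : (Fin d → Ω) → ℝ) (x : Fin d → Ω) : ℝ :=
  (∑ y : Fin d → Ω, if ∀ i ∈ T, y i = x i then μ y * f y else 0) /
  (∑ y : Fin d → Ω, if ∀ i ∈ T, y i = x i then μ y else 0)

/-- Efron–Stein component `f^{=S} = ∑_{T ⊆ S} (-1)^{|S|-|T|} E_T f`. -/
noncomputable def esComp {d : ℕ} {Ω : Type} [Fintype Ω] [DecidableEq Ω]
    (μ : (Fin d → Ω) → ℝ) (S : Finset (Fin d))
    (f : (Fin d → Ω) → ℝ) : (Fin d → Ω) → ℝ :=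
  fun x => ∑ T ∈ S.powerset, (-1 : ℝ) ^ (S.card - T.card) * projE μ T f x

/-- `L^q` norm with respect to the probability mass function `μ`. -/
noncomputable def pnorm {α : Type} [Fintype α] (μ : α → ℝ) (q : ℝ) (f : α → ℝ) : ℝ :=
  (∑ x, μ x * |f x| ^ q) ^ (1 / q)

/-- Conditional (link) measure obtained from `μ` by conditioning the coordinates
in `R` to agree with `z`. -/
noncomputable def condMeasure {d : ℕ} {Ω : Type} [Fintype Ω] [DecidableEq Ω]
    (μ : (Fin d → Ω) → ℝ) (R : Finset (Fin d)) (z : Fin d → Ω) :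
    (Fin d → Ω) → ℝ :=
  fun y => (if ∀ i ∈ R, y i = z i then μ y else 0) /
    (∑ y' : Fin d → Ω, if ∀ i ∈ R, y' i = z i then μ y' else 0)

/-- Expectation with respect to the mass function `μ`. -/
noncomputable def expect {α : Type} [Fintype α] (μ : α → ℝ) (f : α → ℝ) : ℝ :=
  ∑ x, μ x * f x

/-- `X` is a `(q,γ)`-product: in every link of codimension at least `2`
(conditioning the coordinates in `R` on `z`), for every pair of distinct colors
`i, j ∉ R`, the bipartite walk from color `i` to color `j` is a `q`-norm
expander: `‖A^τ_{i,j} g − Π^τ_{i,j} g‖_q ≤ γ ‖g‖_q` for every function `g` of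
the `i`-th coordinate. -/
def IsQGammaProduct {d : ℕ} {Ω : Type} [Fintype Ω] [DecidableEq Ω]
    (μ : (Fin d → Ω) → ℝ) (q γ : ℝ) : Prop :=
  ∀ (R : Finset (Fin d)) (z : Fin d → Ω), R.card + 2 ≤ d →
    ∀ i j : Fin d, i ∉ R → j ∉ R → i ≠ j →
      ∀ g : (Fin d → Ω) → ℝ, (∀ x y, x i = y i → g x = g y) →
        pnorm (condMeasure μ R z) q
            (fun x => projE (condMeasure μ R z) {j} g x - expect (condMeasure μ R z) g)
          ≤ γ * pnorm (condMeasure μ R z) q g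


set_option linter.unusedSectionVars false

section Aux

variable {d : ℕ} {Ω : Type} [Fintype Ω] [DecidableEq Ω]

/-- `f` depends only on the coordinates in `S`. -/
def Meas (S : Finset (Fin d)) (f : (Fin d → Ω) → ℝ) : Prop :=
  ∀ x y, (∀ i ∈ S, x i = y i) → f x = f y

/-- marginal mass of the `S`-class of `x`. -/
noncomputable def cwt (ν : (Fin d → Ω) → ℝ) (S : Finset (Fin d)) (x : Fin d → Ω) : ℝ :=
  ∑ y : Fin d → Ω, if ∀ i ∈ S, y i = x i then ν y else 0

noncomputable def cnum (ν : (Fin d → Ω) → ℝ) (S : Finset (Fin d))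
    (f : (Fin d → Ω) → ℝ) (x : Fin d → Ω) : ℝ :=
  ∑ y : Fin d → Ω, if ∀ i ∈ S, y i = x i then ν y * f y else 0

lemma projE_eq (ν : (Fin d → Ω) → ℝ) (S : Finset (Fin d)) (f : (Fin d → Ω) → ℝ)
    (x : Fin d → Ω) : projE ν S f x = cnum ν S f x / cwt ν S x := rfl

lemma condMeasure_eq (μ : (Fin d → Ω) → ℝ) (R : Finset (Fin d)) (z y : Fin d → Ω) :
    condMeasure μ R z y = (if ∀ i ∈ R, y i = z i then μ y else 0) / cwt μ R z := rfl

lemma cond_iff {S : Finset (Fin d)} {x x' : Fin d → Ω} (h : ∀ i ∈ S, x i = x' i)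
    (y : Fin d → Ω) : (∀ i ∈ S, y i = x i) ↔ (∀ i ∈ S, y i = x' i) := by
  constructor <;> intro hy i hi
  · rw [hy i hi, h i hi]
  · rw [hy i hi, ← h i hi]

lemma cwt_congr {ν : (Fin d → Ω) → ℝ} {S : Finset (Fin d)} {x x' : Fin d → Ω}
    (h : ∀ i ∈ S, x i = x' i) : cwt ν S x = cwt ν S x' :=
  Finset.sum_congr rfl fun y _ => if_congr (cond_iff h y) rfl rfl

lemma cnum_congr {ν : (Fin d → Ω) → ℝ} {S : Finset (Fin d)} {f : (Fin d → Ω) → ℝ}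
    {x x' : Fin d → Ω} (h : ∀ i ∈ S, x i = x' i) : cnum ν S f x = cnum ν S f x' :=
  Finset.sum_congr rfl fun y _ => if_congr (cond_iff h y) rfl rfl

lemma meas_projE (ν : (Fin d → Ω) → ℝ) (S : Finset (Fin d)) (f : (Fin d → Ω) → ℝ) :
    Meas S (projE ν S f) := by
  intro x y h
  rw [projE_eq, projE_eq, cwt_congr h, cnum_congr h]

lemma cwt_nonneg {ν : (Fin d → Ω) → ℝ} (hν : ∀ x, 0 ≤ ν x) (S : Finset (Fin d))
    (x : Fin d → Ω) : 0 ≤ cwt ν S x :=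
  Finset.sum_nonneg fun y _ => by split_ifs with h; exacts [hν y, le_refl 0]

lemma self_le_cwt {ν : (Fin d → Ω) → ℝ} (hν : ∀ x, 0 ≤ ν x) (S : Finset (Fin d))
    (x : Fin d → Ω) : ν x ≤ cwt ν S x := by
  have := Finset.single_le_sum (f := fun y : Fin d → Ω => if ∀ i ∈ S, y i = x i then ν y else 0)
    (fun y _ => by split_ifs with h; exacts [hν y, le_refl 0]) (Finset.mem_univ x)
  simpa [cwt] using this

lemma cwt_eq_zero_imp {ν : (Fin d → Ω) → ℝ} (hν : ∀ x, 0 ≤ ν x) {S : Finset (Fin d)}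
    {x : Fin d → Ω} (h : cwt ν S x = 0) {y : Fin d → Ω} (hy : ∀ i ∈ S, y i = x i) :
    ν y = 0 := by
  have h0 : ν y ≤ cwt ν S y := self_le_cwt hν S y
  rw [cwt_congr hy, h] at h0
  exact le_antisymm h0 (hν y)

/-- Adjointness: `E[f ⋅ E[g|S]] = E[f g]` for `S`-measurable `f`. -/
lemma expect_mul_projE {ν : (Fin d → Ω) → ℝ} (hν : ∀ x, 0 ≤ ν x) {S : Finset (Fin d)}
    {f : (Fin d → Ω) → ℝ} (hf : Meas S f) (g : (Fin d → Ω) → ℝ) :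
    _root_.expect ν (fun x => f x * projE ν S g x) = _root_.expect ν (fun x => f x * g x) := by
  unfold _root_.expect
  calc ∑ x, ν x * (f x * projE ν S g x)
      = ∑ x, ∑ y, (ν x * f x / cwt ν S x) *
          (if ∀ i ∈ S, y i = x i then ν y * g y else 0) := by
        refine Finset.sum_congr rfl fun x _ => ?_
        rw [← Finset.mul_sum]
        show ν x * (f x * (cnum ν S g x / cwt ν S x)) = _
        unfold cnum; ring
    _ = ∑ y, ∑ x, (ν x * f x / cwt ν S x) *
          (if ∀ i ∈ S, y i = x i then ν y * g y else 0) := Finset.sum_comm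
    _ = ∑ y, ν y * (f y * g y) := by
        refine Finset.sum_congr rfl fun y _ => ?_
        have step : ∀ x : Fin d → Ω,
            (ν x * f x / cwt ν S x) * (if ∀ i ∈ S, y i = x i then ν y * g y else 0)
            = (if ∀ i ∈ S, x i = y i then ν x else 0) * (f y / cwt ν S y * (ν y * g y)) := by
          intro x
          by_cases hc : ∀ i ∈ S, y i = x i
          · have hc' : ∀ i ∈ S, x i = y i := fun i hi => (hc i hi).symm
            rw [if_pos hc, if_pos hc', hf x y hc', cwt_congr hc']
            ring
          · have hc' : ¬ ∀ i ∈ S, x i = y i := by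
              intro hx; exact hc fun i hi => (hx i hi).symm
            rw [if_neg hc, if_neg hc']; ring
        rw [Finset.sum_congr rfl fun x _ => step x, ← Finset.sum_mul]
        show cwt ν S y * (f y / cwt ν S y * (ν y * g y)) = _
        by_cases hw : cwt ν S y = 0
        · have : ν y = 0 := cwt_eq_zero_imp hν hw (fun i _ => rfl)
          rw [hw, this]; ring
        · field_simp

lemma expect_projE {ν : (Fin d → Ω) → ℝ} (hν : ∀ x, 0 ≤ ν x) (S : Finset (Fin d))
    (g : (Fin d → Ω) → ℝ) : _root_.expect ν (fun x => projE ν S g x) = _root_.expect ν g := by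
  have := expect_mul_projE (ν := ν) hν (S := S) (f := fun _ => (1:ℝ)) (fun _ _ _ => rfl) g
  simpa using this

end Aux

section Aux2
set_option linter.unusedSectionVars false

variable {d : ℕ} {Ω : Type} [Fintype Ω] [DecidableEq Ω]

/-- Tower identity: `E[f|x_{T'}](x) = E_{link_x}[f]`. -/
lemma projE_eq_expect_cond (ν : (Fin d → Ω) → ℝ) (T' : Finset (Fin d))
    (f : (Fin d → Ω) → ℝ) (x : Fin d → Ω) :
    projE ν T' f x = _root_.expect (condMeasure ν T' x) f := by
  unfold _root_.expect projE condMeasure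
  rw [Finset.sum_div]
  refine (Finset.sum_congr rfl fun y _ => ?_).symm
  split_ifs with h
  · rw [div_mul_eq_mul_div]
  · simp

/-- Tower identity: `E[f|x_{T' ∪ {j}}](x) = E_{link_x}[f | x_j](x)`. -/
lemma projE_insert (ν : (Fin d → Ω) → ℝ) (hν : ∀ x, 0 ≤ ν x) (j : Fin d)
    (T' : Finset (Fin d)) (f : (Fin d → Ω) → ℝ) (x : Fin d → Ω) :
    projE ν (insert j T') f x = projE (condMeasure ν T' x) {j} f x := by
  have hco : ∀ y : Fin d → Ω,
      (∀ i ∈ insert j T', y i = x i) ↔ (y j = x j ∧ ∀ i ∈ T', y i = x i) := by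
    intro y; simp [Finset.forall_mem_insert]
  set M := cwt ν T' x with hM
  have hnum : ∑ y : Fin d → Ω, (if ∀ i ∈ ({j} : Finset (Fin d)), y i = x i then
      condMeasure ν T' x y * f y else 0) = cnum ν (insert j T') f x / M := by
    unfold cnum
    rw [Finset.sum_div]
    refine Finset.sum_congr rfl fun y _ => ?_
    simp only [Finset.mem_singleton, forall_eq]
    unfold condMeasure
    by_cases h1 : y j = x j <;> by_cases h2 : ∀ i ∈ T', y i = x i <;>
      simp [h1, h2, hco y, div_mul_eq_mul_div] <;> rfl
  have hden : ∑ y : Fin d → Ω, (if ∀ i ∈ ({j} : Finset (Fin d)), y i = x i then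
      condMeasure ν T' x y else 0) = cwt ν (insert j T') x / M := by
    unfold cwt
    rw [Finset.sum_div]
    refine Finset.sum_congr rfl fun y _ => ?_
    simp only [Finset.mem_singleton, forall_eq]
    unfold condMeasure
    by_cases h1 : y j = x j <;> by_cases h2 : ∀ i ∈ T', y i = x i <;>
      simp [h1, h2, hco y] <;> rfl
  rw [projE_eq, projE_eq (condMeasure ν T' x), show cnum (condMeasure ν T' x) {j} f x
      = cnum ν (insert j T') f x / M from hnum, show cwt (condMeasure ν T' x) {j} x
      = cwt ν (insert j T') x / M from hden]
  by_cases hM0 : M = 0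
  · have h1 : cwt ν (insert j T') x = 0 := by
      have hle : cwt ν (insert j T') x ≤ M := by
        rw [hM]; unfold cwt
        refine Finset.sum_le_sum fun y _ => ?_
        by_cases h1 : ∀ i ∈ insert j T', y i = x i
        · rw [if_pos h1, if_pos fun i hi => h1 i (Finset.mem_insert_of_mem hi)]
        · split_ifs with h2
          exacts [hν y, le_refl 0]
      exact le_antisymm (hM0 ▸ hle) (cwt_nonneg hν _ _)
    have h2 : cnum ν (insert j T') f x = 0 := by
      unfold cnum
      refine Finset.sum_eq_zero fun y _ => ?_
      split_ifs with h3
      · rw [cwt_eq_zero_imp hν (hM0 : cwt ν T' x = 0)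
          (fun i hi => h3 i (Finset.mem_insert_of_mem hi)), zero_mul]
      · rfl
    rw [h1, h2]; simp
  · by_cases hW : cwt ν (insert j T') x = 0
    · rw [hW]; simp
    · field_simp
end Aux2

section Aux3
set_option linter.unusedSectionVars false

variable {d : ℕ} {Ω : Type} [Fintype Ω] [DecidableEq Ω]

lemma condMeasure_nonneg {μ : (Fin d → Ω) → ℝ} (hμ : ∀ x, 0 ≤ μ x) (R : Finset (Fin d))
    (z y : Fin d → Ω) : 0 ≤ condMeasure μ R z y := by
  rw [condMeasure_eq]
  refine div_nonneg ?_ (cwt_nonneg hμ R z)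
  split_ifs; exacts [hμ y, le_refl 0]

lemma condMeasure_zero {μ : (Fin d → Ω) → ℝ} {R : Finset (Fin d)} {z : Fin d → Ω}
    (hZ : cwt μ R z = 0) (y : Fin d → Ω) : condMeasure μ R z y = 0 := by
  rw [condMeasure_eq, hZ, div_zero]

lemma condMeasure_sum {μ : (Fin d → Ω) → ℝ} {R : Finset (Fin d)} {z : Fin d → Ω}
    (hZ : cwt μ R z ≠ 0) : ∑ y : Fin d → Ω, condMeasure μ R z y = 1 := by
  unfold condMeasure
  rw [← Finset.sum_div]
  exact div_self hZ

lemma condMeasure_congr {ν : (Fin d → Ω) → ℝ} {T' : Finset (Fin d)} {x x' : Fin d → Ω}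
    (h : ∀ i ∈ T', x i = x' i) : condMeasure ν T' x = condMeasure ν T' x' := by
  funext w
  rw [condMeasure_eq, condMeasure_eq, cwt_congr h, if_congr (cond_iff h w) rfl rfl]

/-- Composition: a link of a link is a link. -/
lemma condMeasure_comp (μ : (Fin d → Ω) → ℝ) (R T' : Finset (Fin d)) (z x : Fin d → Ω)
    (hZ : cwt μ R z ≠ 0) (hRT : Disjoint R T') :
    condMeasure (condMeasure μ R z) T' x
      = condMeasure μ (R ∪ T') (fun i => if i ∈ T' then x i else z i) := by
  set u : Fin d → Ω := fun i => if i ∈ T' then x i else z i with hu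
  have hux : ∀ i ∈ T', u i = x i := fun i hi => by simp [hu, hi]
  have huz : ∀ i ∈ R, u i = z i := fun i hi => by
    have hiT : i ∉ T' := Finset.disjoint_left.1 hRT hi
    simp [hu, hiT]
  have hcond : ∀ w : Fin d → Ω,
      (∀ i ∈ R ∪ T', w i = u i) ↔ ((∀ i ∈ T', w i = x i) ∧ (∀ i ∈ R, w i = z i)) := by
    intro w
    constructor
    · intro hw
      exact ⟨fun i hi => (hw i (Finset.mem_union_right _ hi)).trans (hux i hi),
        fun i hi => (hw i (Finset.mem_union_left _ hi)).trans (huz i hi)⟩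
    · rintro ⟨h1, h2⟩ i hi
      rcases Finset.mem_union.1 hi with hiR | hiT
      · rw [h2 i hiR, huz i hiR]
      · rw [h1 i hiT, hux i hiT]
  funext y
  have hkey : ∀ w : Fin d → Ω,
      (if ∀ i ∈ T', w i = x i then condMeasure μ R z w else 0)
        = (if ∀ i ∈ R ∪ T', w i = u i then μ w else 0) / cwt μ R z := by
    intro w
    rw [condMeasure_eq]
    by_cases h1 : ∀ i ∈ T', w i = x i
    · by_cases h2 : ∀ i ∈ R, w i = z i
      · rw [if_pos h1, if_pos h2, if_pos ((hcond w).2 ⟨h1, h2⟩)]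
      · rw [if_pos h1, if_neg h2, if_neg (fun hc => h2 ((hcond w).1 hc).2), zero_div]
    · rw [if_neg h1, if_neg (fun hc => h1 ((hcond w).1 hc).1), zero_div]
  have hden : cwt (condMeasure μ R z) T' x = cwt μ (R ∪ T') u / cwt μ R z := by
    unfold cwt
    rw [Finset.sum_div]
    exact Finset.sum_congr rfl fun w _ => hkey w
  rw [condMeasure_eq (condMeasure μ R z) T' x y, hkey y, hden, condMeasure_eq μ (R ∪ T') u y]
  by_cases hV : cwt μ (R ∪ T') u = 0
  · rw [hV]; simp
  · field_simp

lemma pnorm_nonneg {α : Type} [Fintype α] {μ : α → ℝ} (hμ : ∀ x, 0 ≤ μ x) (q : ℝ)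
    (f : α → ℝ) : 0 ≤ pnorm μ q f :=
  Real.rpow_nonneg (Finset.sum_nonneg fun x _ =>
    mul_nonneg (hμ x) (Real.rpow_nonneg (abs_nonneg _) _)) _

lemma pnorm_sum_nonneg {α : Type} [Fintype α] {μ : α → ℝ} (hμ : ∀ x, 0 ≤ μ x) (q : ℝ)
    (f : α → ℝ) : 0 ≤ ∑ x, μ x * |f x| ^ q :=
  Finset.sum_nonneg fun x _ => mul_nonneg (hμ x) (Real.rpow_nonneg (abs_nonneg _) _)

lemma pnorm_rpow {α : Type} [Fintype α] {μ : α → ℝ} (hμ : ∀ x, 0 ≤ μ x) {q : ℝ}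
    (hq : q ≠ 0) (f : α → ℝ) : pnorm μ q f ^ q = ∑ x, μ x * |f x| ^ q := by
  unfold pnorm
  rw [← Real.rpow_mul (pnorm_sum_nonneg hμ q f), one_div, inv_mul_cancel₀ hq, Real.rpow_one]

/-- Weighted Hölder inequality. -/
lemma hoelder {α : Type} [Fintype α] {μ : α → ℝ} (hμ : ∀ x, 0 ≤ μ x) {p p' : ℝ}
    (hpq : Real.HolderConjugate p p') (a b : α → ℝ) :
    |_root_.expect μ (fun x => a x * b x)| ≤ pnorm μ p a * pnorm μ p' b := by
  have hp0 : p ≠ 0 := ne_of_gt hpq.pos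
  have hp'0 : p' ≠ 0 := ne_of_gt hpq.symm.pos
  have hsum : 1/p + 1/p' = 1 := by rw [one_div, one_div]; exact hpq.inv_add_inv_eq_one
  have key : ∀ x, μ x = μ x ^ (1/p) * μ x ^ (1/p') := by
    intro x
    rw [← Real.rpow_add' (hμ x) (by rw [hsum]; norm_num), hsum, Real.rpow_one]
  have h1 : |_root_.expect μ (fun x => a x * b x)|
      ≤ ∑ x, (μ x ^ (1/p) * |a x|) * (μ x ^ (1/p') * |b x|) := by
    unfold _root_.expect
    refine (Finset.abs_sum_le_sum_abs _ _).trans (le_of_eq (Finset.sum_congr rfl fun x _ => ?_))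
    calc |μ x * (a x * b x)| = μ x * (|a x| * |b x|) := by
          rw [abs_mul, abs_mul, abs_of_nonneg (hμ x)]
      _ = (μ x ^ (1/p) * |a x|) * (μ x ^ (1/p') * |b x|) := by
          nth_rewrite 1 [key x]; ring
  refine h1.trans ?_
  have h2 := Real.inner_le_Lp_mul_Lq (Finset.univ (α := α))
    (fun x => μ x ^ (1/p) * |a x|) (fun x => μ x ^ (1/p') * |b x|) hpq
  have e1 : ∀ x : α, abs (μ x ^ (1/p) * |a x|) ^ p = μ x * |a x| ^ p := by
    intro x
    rw [abs_of_nonneg (mul_nonneg (Real.rpow_nonneg (hμ x) _) (abs_nonneg _)),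
      Real.mul_rpow (Real.rpow_nonneg (hμ x) _) (abs_nonneg _),
      ← Real.rpow_mul (hμ x), one_div, inv_mul_cancel₀ hp0, Real.rpow_one]
  have e2 : ∀ x : α, abs (μ x ^ (1/p') * |b x|) ^ p' = μ x * |b x| ^ p' := by
    intro x
    rw [abs_of_nonneg (mul_nonneg (Real.rpow_nonneg (hμ x) _) (abs_nonneg _)),
      Real.mul_rpow (Real.rpow_nonneg (hμ x) _) (abs_nonneg _),
      ← Real.rpow_mul (hμ x), one_div, inv_mul_cancel₀ hp'0, Real.rpow_one]
  simp only [e1, e2] at h2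
  exact h2

/-- Weighted Minkowski inequality. -/
lemma minkowski {α : Type} [Fintype α] {μ : α → ℝ} (hμ : ∀ x, 0 ≤ μ x) {p : ℝ}
    (hp : 1 ≤ p) (a b : α → ℝ) :
    pnorm μ p (fun x => a x + b x) ≤ pnorm μ p a + pnorm μ p b := by
  have hp0 : p ≠ 0 := by positivity
  have h := Real.Lp_add_le (Finset.univ (α := α))
    (fun x => μ x ^ (1/p) * a x) (fun x => μ x ^ (1/p) * b x) hp
  have key : ∀ c : α → ℝ, ∀ x : α, |μ x ^ (1/p) * c x| ^ p = μ x * |c x| ^ p := by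
    intro c x
    rw [abs_mul, abs_of_nonneg (Real.rpow_nonneg (hμ x) _),
      Real.mul_rpow (Real.rpow_nonneg (hμ x) _) (abs_nonneg _),
      ← Real.rpow_mul (hμ x), one_div, inv_mul_cancel₀ hp0, Real.rpow_one]
  have e0 : ∀ x : α, |μ x ^ (1/p) * a x + μ x ^ (1/p) * b x| ^ p
      = μ x * |a x + b x| ^ p := by
    intro x
    rw [← mul_add]
    exact key (fun x => a x + b x) x
  simp only [e0, key a, key b] at h
  exact h

end Aux3

section Aux4
set_option linter.unusedSectionVars false

variable {d : ℕ} {Ω : Type} [Fintype Ω] [DecidableEq Ω]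

lemma expect_congr {ν : (Fin d → Ω) → ℝ} {a b : (Fin d → Ω) → ℝ} (h : ∀ x, a x = b x) :
    _root_.expect ν a = _root_.expect ν b := by
  unfold _root_.expect
  exact Finset.sum_congr rfl fun x _ => by rw [h x]

lemma expect_sub {ν : (Fin d → Ω) → ℝ} (a b : (Fin d → Ω) → ℝ) :
    _root_.expect ν (fun x => a x - b x) = _root_.expect ν a - _root_.expect ν b := by
  unfold _root_.expect
  rw [← Finset.sum_sub_distrib]
  exact Finset.sum_congr rfl fun x _ => by ring

lemma expect_congr_ae {ν : (Fin d → Ω) → ℝ} {a b : (Fin d → Ω) → ℝ}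
    (h : ∀ x, ν x ≠ 0 → a x = b x) : _root_.expect ν a = _root_.expect ν b := by
  unfold _root_.expect
  refine Finset.sum_congr rfl fun x _ => ?_
  by_cases hx : ν x = 0
  · rw [hx, zero_mul, zero_mul]
  · rw [h x hx]

lemma expect_sub_const {ν : (Fin d → Ω) → ℝ} (a : (Fin d → Ω) → ℝ) (c : ℝ) :
    _root_.expect ν (fun x => a x - c) = _root_.expect ν a - _root_.expect ν (fun _ => c) := by
  unfold _root_.expect
  rw [← Finset.sum_sub_distrib]
  exact Finset.sum_congr rfl fun x _ => by ring

/-- Duality: an `L^p` bound for the `(Tm,Sm)` walk gives an `L^{p'}` bound for the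
`(Sm,Tm)` walk. -/
lemma dual_step {ν : (Fin d → Ω) → ℝ} (hν : ∀ x, 0 ≤ ν x) (hν1 : ∑ x, ν x = 1)
    {p p' : ℝ} (hpq : Real.HolderConjugate p p')
    {C : ℝ} (hC : 0 ≤ C) (Sm Tm : Finset (Fin d))
    (H : ∀ g, Meas Tm g →
      pnorm ν p (fun x => projE ν Sm g x - _root_.expect ν g) ≤ C * pnorm ν p g)
    (f : (Fin d → Ω) → ℝ) (hf : Meas Sm f) :
    pnorm ν p' (fun x => projE ν Tm f x - _root_.expect ν f) ≤ C * pnorm ν p' f := by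
  have hp0 : p ≠ 0 := ne_of_gt hpq.pos
  have hp'0 : p' ≠ 0 := ne_of_gt hpq.symm.pos
  have hp'1 : 1 < p' := hpq.symm.lt
  have hsum : 1/p + 1/p' = 1 := by rw [one_div, one_div]; exact hpq.inv_add_inv_eq_one
  have hprod : p + p' = p * p' := by
    field_simp at hsum
    linarith [hsum]
  have hexp : (p' - 1) * p = p' := by ring_nf; linarith [hprod]
  set h : (Fin d → Ω) → ℝ := fun x => projE ν Tm f x - _root_.expect ν f with hh
  have hmh : Meas Tm h := by
    intro x y hxy
    simp only [hh]
    rw [meas_projE ν Tm f x y hxy]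
  set A := ∑ x, ν x * |h x| ^ p' with hA
  have hA0 : 0 ≤ A := pnorm_sum_nonneg hν p' h
  have hLHS : pnorm ν p' h = A ^ (1/p') := rfl
  rcases eq_or_lt_of_le hA0 with hAz | hApos
  · rw [hLHS, ← hAz, Real.zero_rpow (by positivity : (1:ℝ)/p' ≠ 0)]
    exact mul_nonneg hC (pnorm_nonneg hν _ _)
  · set g₀ : (Fin d → Ω) → ℝ := fun x => Real.sign (h x) * |h x| ^ (p' - 1) with hg₀
    have F1 : ∀ x, g₀ x * h x = |h x| ^ p' := by
      intro x
      rcases eq_or_ne (h x) 0 with h0 | h0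
      · simp [hg₀, h0, Real.sign_zero, Real.zero_rpow hp'0]
      · have habs : 0 < |h x| := abs_pos.2 h0
        have hsgn : Real.sign (h x) * h x = |h x| := by
          rcases h0.lt_or_gt with hneg | hpos
          · rw [Real.sign_of_neg hneg, abs_of_neg hneg]; ring
          · rw [Real.sign_of_pos hpos, abs_of_pos hpos]; ring
        calc g₀ x * h x = |h x| ^ (p' - 1) * (Real.sign (h x) * h x) := by rw [hg₀]; ring
          _ = |h x| ^ (p' - 1) * |h x| ^ (1:ℝ) := by rw [hsgn, Real.rpow_one]
          _ = |h x| ^ p' := by rw [← Real.rpow_add habs]; norm_num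
    have F2 : ∀ x, |g₀ x| ^ p = |h x| ^ p' := by
      intro x
      rcases eq_or_ne (h x) 0 with h0 | h0
      · simp [hg₀, h0, Real.sign_zero, Real.zero_rpow hp'0, Real.zero_rpow hp0,
          Real.zero_rpow (by intro hc; exact hp'0 (by linarith) : p' - 1 ≠ 0)]
      · have hsgn : |Real.sign (h x)| = 1 := by
          rcases h0.lt_or_gt with hneg | hpos
          · rw [Real.sign_of_neg hneg]; norm_num
          · rw [Real.sign_of_pos hpos]; norm_num
        rw [hg₀]
        simp only
        rw [abs_mul, hsgn, one_mul, abs_of_nonneg (Real.rpow_nonneg (abs_nonneg _) _),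
          ← Real.rpow_mul (abs_nonneg _), hexp]
    have F3 : Meas Tm g₀ := by
      intro x y hxy
      simp only [hg₀]
      rw [hmh x y hxy]
    have key1 : _root_.expect ν (fun x => g₀ x * h x) = A := by
      unfold _root_.expect
      exact Finset.sum_congr rfl fun x _ => by dsimp only; rw [F1]
    have adj1 : _root_.expect ν (fun x => g₀ x * projE ν Tm f x)
        = _root_.expect ν (fun x => g₀ x * f x) := expect_mul_projE hν F3 f
    have adj2 : _root_.expect ν (fun x => f x * projE ν Sm g₀ x)
        = _root_.expect ν (fun x => f x * g₀ x) := expect_mul_projE hν hf g₀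
    have cst : ∀ (a : (Fin d → Ω) → ℝ) (c : ℝ),
        _root_.expect ν (fun x => a x * c) = c * _root_.expect ν a := by
      intro a c
      unfold _root_.expect
      rw [Finset.mul_sum]
      exact Finset.sum_congr rfl fun x _ => by ring
    set k : (Fin d → Ω) → ℝ := fun x => projE ν Sm g₀ x - _root_.expect ν g₀ with hk
    have key2 : _root_.expect ν (fun x => g₀ x * h x) = _root_.expect ν (fun x => k x * f x) := by
      have e1 : _root_.expect ν (fun x => g₀ x * h x)
          = _root_.expect ν (fun x => g₀ x * f x)
            - _root_.expect ν f * _root_.expect ν g₀ := by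
        calc _root_.expect ν (fun x => g₀ x * h x)
            = _root_.expect ν (fun x => g₀ x * projE ν Tm f x
                - g₀ x * _root_.expect ν f) :=
              expect_congr fun x => by simp only [hh]; ring
          _ = _root_.expect ν (fun x => g₀ x * projE ν Tm f x)
                - _root_.expect ν (fun x => g₀ x * _root_.expect ν f) := expect_sub _ _
          _ = _root_.expect ν (fun x => g₀ x * f x)
                - _root_.expect ν f * _root_.expect ν g₀ := by
              rw [adj1, cst g₀ (_root_.expect ν f)]
      have e2 : _root_.expect ν (fun x => k x * f x)
          = _root_.expect ν (fun x => g₀ x * f x)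
            - _root_.expect ν f * _root_.expect ν g₀ := by
        calc _root_.expect ν (fun x => k x * f x)
            = _root_.expect ν (fun x => f x * projE ν Sm g₀ x
                - f x * _root_.expect ν g₀) :=
              expect_congr fun x => by simp only [hk]; ring
          _ = _root_.expect ν (fun x => f x * projE ν Sm g₀ x)
                - _root_.expect ν (fun x => f x * _root_.expect ν g₀) := expect_sub _ _
          _ = _root_.expect ν (fun x => g₀ x * f x)
                - _root_.expect ν f * _root_.expect ν g₀ := by
              rw [adj2, cst f (_root_.expect ν g₀)]
              rw [expect_congr (ν := ν) (a := fun x => f x * g₀ x)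
                (b := fun x => g₀ x * f x) (fun x => by ring)]
              ring
      rw [e1, e2]
    have key4 : pnorm ν p g₀ = A ^ (1/p) := by
      unfold pnorm
      rw [show ∑ x, ν x * |g₀ x| ^ p = A from Finset.sum_congr rfl fun x _ => by rw [F2]]
    have key3 : A ≤ C * A ^ (1/p) * pnorm ν p' f := by
      calc A = _root_.expect ν (fun x => k x * f x) := by rw [← key2, key1]
        _ ≤ |_root_.expect ν (fun x => k x * f x)| := le_abs_self _
        _ ≤ pnorm ν p k * pnorm ν p' f := hoelder hν hpq k f
        _ ≤ (C * pnorm ν p g₀) * pnorm ν p' f :=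
            mul_le_mul_of_nonneg_right (H g₀ F3) (pnorm_nonneg hν _ _)
        _ = C * A ^ (1/p) * pnorm ν p' f := by rw [key4]
    have hsplit : A = A ^ (1/p) * A ^ (1/p') := by
      rw [← Real.rpow_add hApos, hsum, Real.rpow_one]
    rw [hLHS]
    have hApow : 0 < A ^ (1/p) := Real.rpow_pos_of_pos hApos _
    refine (mul_le_mul_iff_right₀ hApow).1 ?_
    calc A ^ (1/p) * A ^ (1/p') = A := hsplit.symm
      _ ≤ C * A ^ (1/p) * pnorm ν p' f := key3
      _ = A ^ (1/p) * (C * pnorm ν p' f) := by ring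
end Aux4

section MainInduction
set_option linter.unusedSectionVars false
set_option maxHeartbeats 1000000

variable {d : ℕ} {Ω : Type} [Fintype Ω] [DecidableEq Ω]

lemma main_induction (μ : (Fin d → Ω) → ℝ) (hμ0 : ∀ x, 0 ≤ μ x)
    (q γ : ℝ) (hq : 1 < q) (hγ : 0 ≤ γ) (hX : IsQGammaProduct μ q γ) :
    ∀ n : ℕ, ∀ S T R : Finset (Fin d), ∀ z : Fin d → Ω,
      2 * (S.card + T.card) + (if T.card = 1 ∧ 2 ≤ S.card then 1 else 0) ≤ n →
      Disjoint S T → Disjoint R S → Disjoint R T →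
      ∀ r : ℝ, (r = q ∨ r = q / (q - 1)) →
      ∀ f : (Fin d → Ω) → ℝ, Meas S f →
      pnorm (condMeasure μ R z) r
          (fun x => projE (condMeasure μ R z) T f x - _root_.expect (condMeasure μ R z) f)
        ≤ (S.card : ℝ) * T.card * γ * pnorm (condMeasure μ R z) r f := by
  intro n
  induction n using Nat.strong_induction_on with
  | _ n IH =>
  intro S T R z hrank hST hRS hRT r hr f hf
  have hqm : (0:ℝ) < q - 1 := by linarith
  have hq'1 : 1 < q / (q - 1) := (one_lt_div hqm).2 (by linarith)
  have hqne : q ≠ 0 := by linarith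
  have hr1 : 1 < r := by
    rcases hr with h | h
    · rw [h]; exact hq
    · rw [h]; exact hq'1
  have hrpos : (0:ℝ) < r := lt_trans one_pos hr1
  have hrne : r ≠ 0 := ne_of_gt hrpos
  have hconjqq' : Real.HolderConjugate q (q / (q - 1)) := by
    exact Real.HolderConjugate.conjExponent hq
  set ν := condMeasure μ R z with hν
  by_cases hZ : cwt μ R z = 0
  · -- degenerate link: the measure vanishes identically
    have hz : ∀ y, ν y = 0 := fun y => condMeasure_zero hZ y
    have hzn : ∀ g : (Fin d → Ω) → ℝ, pnorm ν r g = 0 := by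
      intro g
      unfold pnorm
      rw [Finset.sum_eq_zero fun x _ => by rw [hz x, zero_mul],
        Real.zero_rpow (one_div_ne_zero hrne)]
    rw [hzn, hzn]
    simp
  have hν0 : ∀ y, 0 ≤ ν y := fun y => condMeasure_nonneg hμ0 R z y
  have hν1 : ∑ y, ν y = 1 := condMeasure_sum hZ
  have hRHS0 : 0 ≤ (S.card : ℝ) * T.card * γ * pnorm ν r f :=
    mul_nonneg (mul_nonneg (mul_nonneg (Nat.cast_nonneg _) (Nat.cast_nonneg _)) hγ)
      (pnorm_nonneg hν0 _ _)
  rcases Finset.eq_empty_or_nonempty T with hTe | hTne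
  · -- T = ∅
    subst hTe
    have hproj : ∀ x, projE ν ∅ f x = _root_.expect ν f := by
      intro x
      rw [projE_eq]
      unfold cnum cwt _root_.expect
      simp only [Finset.notMem_empty, false_implies, implies_true, if_true]
      rw [hν1, div_one]
    have hfun : (fun x => projE ν ∅ f x - _root_.expect ν f) = fun _ => (0:ℝ) :=
      funext fun x => by rw [hproj x]; ring
    rw [hfun]
    have hzero : pnorm ν r (fun _ => (0:ℝ)) = 0 := by
      unfold pnorm
      rw [Finset.sum_eq_zero fun x _ => by
        rw [abs_zero, Real.zero_rpow hrne, mul_zero],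
        Real.zero_rpow (one_div_ne_zero hrne)]
    rw [hzero]
    exact hRHS0
  rcases Finset.eq_empty_or_nonempty S with hSe | hSne
  · -- S = ∅ : f is constant
    subst hSe
    have hconst : ∀ x y, f x = f y := fun x y =>
      hf x y (fun i hi => absurd hi (Finset.notMem_empty i))
    have hpt : ∀ x, ν x * |projE ν T f x - _root_.expect ν f| ^ r = 0 := by
      intro x
      by_cases hx : ν x = 0
      · rw [hx, zero_mul]
      · have hwx : cwt ν T x ≠ 0 := by
          intro hc
          exact hx (le_antisymm (hc ▸ self_le_cwt hν0 T x) (hν0 x))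
        have h1 : projE ν T f x = f x := by
          rw [projE_eq]
          have hcn : cnum ν T f x = cwt ν T x * f x := by
            unfold cnum cwt
            rw [Finset.sum_mul]
            refine Finset.sum_congr rfl fun y _ => ?_
            split_ifs with h
            · rw [hconst y x]
            · rw [zero_mul]
          rw [hcn, mul_comm, mul_div_assoc, div_self hwx, mul_one]
        have h2 : _root_.expect ν f = f x := by
          unfold _root_.expect
          calc ∑ y, ν y * f y = ∑ y, ν y * f x :=
                Finset.sum_congr rfl fun y _ => by rw [hconst y x]
            _ = f x := by rw [← Finset.sum_mul, hν1, one_mul]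
        rw [h1, h2, sub_self, abs_zero, Real.zero_rpow hrne, mul_zero]
    have hzero : pnorm ν r (fun x => projE ν T f x - _root_.expect ν f) = 0 := by
      unfold pnorm
      rw [Finset.sum_eq_zero fun x _ => hpt x, Real.zero_rpow (one_div_ne_zero hrne)]
    rw [hzero]
    exact hRHS0
  -- both nonempty
  by_cases hT1 : T.card = 1
  · -- |T| = 1
    obtain ⟨j, hTj⟩ := Finset.card_eq_one.1 hT1
    subst hTj
    have hjS : j ∉ S := Finset.disjoint_right.1 hST (Finset.mem_singleton_self j)
    have hjR : j ∉ R := Finset.disjoint_right.1 hRT (Finset.mem_singleton_self j)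
    by_cases hS1 : S.card = 1
    · -- base case |S| = |T| = 1
      obtain ⟨i, hSi⟩ := Finset.card_eq_one.1 hS1
      subst hSi
      have hij : i ≠ j := fun hc => hjS (hc ▸ Finset.mem_singleton_self i)
      have hiR : i ∉ R := Finset.disjoint_right.1 hRS (Finset.mem_singleton_self i)
      have hcard2 : R.card + 2 ≤ d := by
        have h1 : (insert i (insert j R)).card ≤ Fintype.card (Fin d) :=
          Finset.card_le_univ _
        rw [Finset.card_insert_of_notMem (by simp [hiR, hij]),
          Finset.card_insert_of_notMem hjR, Fintype.card_fin] at h1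
        omega
      have hfi : ∀ x y : Fin d → Ω, x i = y i → f x = f y := fun x y hxy =>
        hf x y (fun k hk => by rw [Finset.mem_singleton.1 hk]; exact hxy)
      rcases hr with hrq | hrq'
      · subst hrq
        have hb := hX R z hcard2 i j hiR hjR hij f hfi
        simp only [Finset.card_singleton, Nat.cast_one, one_mul]
        exact hb
      · subst hrq'
        have H : ∀ g : (Fin d → Ω) → ℝ, Meas ({j} : Finset (Fin d)) g →
            pnorm ν q (fun x => projE ν {i} g x - _root_.expect ν g) ≤ γ * pnorm ν q g := by
          intro g hg
          exact hX R z hcard2 j i hjR hiR hij.symm g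
            (fun x y hxy => hg x y (fun k hk => by rw [Finset.mem_singleton.1 hk]; exact hxy))
        have hd := dual_step hν0 hν1 hconjqq' hγ {i} {j} H f hf
        simp only [Finset.card_singleton, Nat.cast_one, one_mul]
        exact hd
    · -- |S| ≥ 2 : use duality and the induction hypothesis for ({j}, S)
      have hS2 : 2 ≤ S.card := by
        have := Finset.card_pos.2 hSne
        omega
      obtain ⟨r', hr', hconj⟩ : ∃ r', (r' = q ∨ r' = q / (q - 1)) ∧
          Real.HolderConjugate r' r := by
        rcases hr with h | h
        · exact ⟨q / (q - 1), Or.inr rfl, h ▸ hconjqq'.symm⟩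
        · exact ⟨q, Or.inl rfl, h ▸ hconjqq'⟩
      have hrankjS : 2 * (({j} : Finset (Fin d)).card + S.card) +
          (if S.card = 1 ∧ 2 ≤ ({j} : Finset (Fin d)).card then 1 else 0) < n := by
        rw [Finset.card_singleton]
        rw [if_neg (by omega : ¬(S.card = 1 ∧ 2 ≤ 1))]
        rw [Finset.card_singleton, if_pos ⟨rfl, hS2⟩] at hrank
        omega
      have H : ∀ g : (Fin d → Ω) → ℝ, Meas ({j} : Finset (Fin d)) g →
          pnorm ν r' (fun x => projE ν S g x - _root_.expect ν g)
            ≤ ((S.card : ℝ) * γ) * pnorm ν r' g := by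
        intro g hg
        have := IH _ hrankjS {j} S R z (le_refl _) (Finset.disjoint_singleton_left.2 hjS)
          hRT hRS r' hr' g hg
        simpa using this
      have hd := dual_step hν0 hν1 hconj
        (mul_nonneg (Nat.cast_nonneg _) hγ) S {j} H f hf
      calc pnorm ν r (fun x => projE ν {j} f x - _root_.expect ν f)
          ≤ (S.card : ℝ) * γ * pnorm ν r f := hd
        _ = (S.card : ℝ) * (({j} : Finset (Fin d)).card : ℝ) * γ * pnorm ν r f := by
            rw [Finset.card_singleton]; push_cast; ring
  · -- |T| ≥ 2 : telescoping
    obtain ⟨j, hj⟩ := hTne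
    have hTcard2 : 2 ≤ T.card := by
      have := Finset.card_pos.2 ⟨j, hj⟩
      omega
    set T' := T.erase j with hT'def
    have hjT' : j ∉ T' := Finset.notMem_erase j T
    have hT'sub : T' ⊆ T := Finset.erase_subset j T
    have hT'card : T'.card = T.card - 1 := Finset.card_erase_of_mem hj
    have hins : insert j T' = T := Finset.insert_erase hj
    have hjS : j ∉ S := Finset.disjoint_right.1 hST hj
    have hjR : j ∉ R := Finset.disjoint_right.1 hRT hj
    have hif0 : (if T.card = 1 ∧ 2 ≤ S.card then 1 else 0) = 0 :=
      if_neg (fun hc => absurd hc.1 (by omega))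
    rw [hif0] at hrank
    -- bound for the T' part
    have hrankT' : 2 * (S.card + T'.card) +
        (if T'.card = 1 ∧ 2 ≤ S.card then 1 else 0) < n := by
      rw [hT'card]
      split_ifs <;> omega
    have hIH2 := IH _ hrankT' S T' R z (le_refl _)
      (Finset.disjoint_of_subset_right hT'sub hST) hRS
      (Finset.disjoint_of_subset_right hT'sub hRT) r hr f hf
    -- bound for the one-step part via links
    set K := (S.card : ℝ) * γ with hK
    have hK0 : 0 ≤ K := mul_nonneg (Nat.cast_nonneg _) hγ
    have hlink : ∀ x : Fin d → Ω,
        pnorm (condMeasure ν T' x) r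
          (fun y => projE (condMeasure ν T' x) {j} f y
            - _root_.expect (condMeasure ν T' x) f)
          ≤ K * pnorm (condMeasure ν T' x) r f := by
      intro x
      have hcomp := condMeasure_comp μ R T' z x hZ
        (Finset.disjoint_of_subset_right hT'sub hRT)
      rw [hν, hcomp]
      have hrankSj : 2 * (S.card + ({j} : Finset (Fin d)).card) +
          (if ({j} : Finset (Fin d)).card = 1 ∧ 2 ≤ S.card then 1 else 0) < n := by
        rw [Finset.card_singleton]
        split_ifs <;> omega
      have hdisj1 : Disjoint S ({j} : Finset (Fin d)) :=
        Finset.disjoint_singleton_right.2 hjS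
      have hdisj2 : Disjoint (R ∪ T') S :=
        Finset.disjoint_union_left.2
          ⟨hRS, Finset.disjoint_of_subset_left hT'sub hST.symm⟩
      have hdisj3 : Disjoint (R ∪ T') ({j} : Finset (Fin d)) :=
        Finset.disjoint_union_left.2
          ⟨Finset.disjoint_singleton_right.2 hjR, Finset.disjoint_singleton_right.2 hjT'⟩
      have := IH _ hrankSj S {j} (R ∪ T')
        (fun i => if i ∈ T' then x i else z i) (le_refl _) hdisj1 hdisj2 hdisj3 r hr f hf
      calc pnorm (condMeasure μ (R ∪ T') fun i => if i ∈ T' then x i else z i) r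
            (fun y => projE (condMeasure μ (R ∪ T') fun i => if i ∈ T' then x i else z i) {j} f y
              - _root_.expect (condMeasure μ (R ∪ T') fun i => if i ∈ T' then x i else z i) f)
          ≤ (S.card : ℝ) * (({j} : Finset (Fin d)).card : ℝ) * γ *
              pnorm (condMeasure μ (R ∪ T') fun i => if i ∈ T' then x i else z i) r f := this
        _ = K * pnorm (condMeasure μ (R ∪ T') fun i => if i ∈ T' then x i else z i) r f := by
            rw [Finset.card_singleton, hK]; push_cast; ring
    -- localization: pointwise comparison of conditional moments
    set h1 : (Fin d → Ω) → ℝ := fun y => projE ν T f y - projE ν T' f y with hh1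
    have hstepA : ∀ x : Fin d → Ω,
        projE ν T' (fun y => |h1 y| ^ r) x ≤ K ^ r * projE ν T' (fun y => |f y| ^ r) x := by
      intro x
      have hlnn : ∀ y, 0 ≤ condMeasure ν T' x y := condMeasure_nonneg hν0 T' x
      rw [projE_eq_expect_cond, projE_eq_expect_cond]
      have hptw : _root_.expect (condMeasure ν T' x) (fun y => |h1 y| ^ r)
          = _root_.expect (condMeasure ν T' x) (fun y =>
              |projE (condMeasure ν T' x) {j} f y
                - _root_.expect (condMeasure ν T' x) f| ^ r) := by
        refine expect_congr_ae fun y hy => ?_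
        have hyx : ∀ i ∈ T', y i = x i := by
          by_contra hc
          exact hy (by rw [condMeasure_eq, if_neg hc, zero_div])
        have hlink_eq : condMeasure ν T' y = condMeasure ν T' x := condMeasure_congr hyx
        have hval : h1 y = projE (condMeasure ν T' x) {j} f y
            - _root_.expect (condMeasure ν T' x) f := by
          rw [hh1]
          simp only
          rw [← hins, projE_insert ν hν0 j T' f y, projE_eq_expect_cond ν T' f y, hlink_eq]
        rw [hval]
      rw [hptw]
      have hp := Real.rpow_le_rpow
        (pnorm_nonneg hlnn r (fun y => projE (condMeasure ν T' x) {j} f y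
          - _root_.expect (condMeasure ν T' x) f)) (hlink x) (le_of_lt hrpos)
      rw [pnorm_rpow hlnn hrne, Real.mul_rpow hK0 (pnorm_nonneg hlnn r f),
        pnorm_rpow hlnn hrne] at hp
      calc ∑ y, condMeasure ν T' x y *
            |projE (condMeasure ν T' x) {j} f y - _root_.expect (condMeasure ν T' x) f| ^ r
          ≤ K ^ r * ∑ y, condMeasure ν T' x y * |f y| ^ r := hp
        _ = K ^ r * _root_.expect (condMeasure ν T' x) (fun y => |f y| ^ r) := rfl
    -- global bound on the one-step part
    have hstepB : ∑ x, ν x * |h1 x| ^ r ≤ K ^ r * ∑ x, ν x * |f x| ^ r := by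
      have e1 : ∑ x, ν x * |h1 x| ^ r
          = _root_.expect ν (fun x => projE ν T' (fun y => |h1 y| ^ r) x) := by
        rw [expect_projE hν0 T' (fun y => |h1 y| ^ r)]
        rfl
      have e2 : _root_.expect ν (fun x => projE ν T' (fun y => |h1 y| ^ r) x)
          ≤ _root_.expect ν (fun x => K ^ r * projE ν T' (fun y => |f y| ^ r) x) := by
        unfold _root_.expect
        exact Finset.sum_le_sum fun x _ =>
          mul_le_mul_of_nonneg_left (hstepA x) (hν0 x)
      have e3 : _root_.expect ν (fun x => K ^ r * projE ν T' (fun y => |f y| ^ r) x)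
          = K ^ r * _root_.expect ν (fun x => projE ν T' (fun y => |f y| ^ r) x) := by
        unfold _root_.expect
        rw [Finset.mul_sum]
        exact Finset.sum_congr rfl fun x _ => by ring
      have e4 : _root_.expect ν (fun x => projE ν T' (fun y => |f y| ^ r) x)
          = ∑ x, ν x * |f x| ^ r := by
        rw [expect_projE hν0 T' (fun y => |f y| ^ r)]
        rfl
      rw [e1]
      refine e2.trans ?_
      rw [e3, e4]
    have hstepC : pnorm ν r h1 ≤ K * pnorm ν r f := by
      unfold pnorm
      have h0 : (0:ℝ) ≤ ∑ x, ν x * |h1 x| ^ r := pnorm_sum_nonneg hν0 r h1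
      have h2 : (0:ℝ) ≤ ∑ x, ν x * |f x| ^ r := pnorm_sum_nonneg hν0 r f
      calc (∑ x, ν x * |h1 x| ^ r) ^ (1/r)
          ≤ (K ^ r * ∑ x, ν x * |f x| ^ r) ^ (1/r) :=
            Real.rpow_le_rpow h0 hstepB (by positivity)
        _ = (K ^ r) ^ (1/r) * (∑ x, ν x * |f x| ^ r) ^ (1/r) :=
            Real.mul_rpow (Real.rpow_nonneg hK0 r) h2
        _ = K * (∑ x, ν x * |f x| ^ r) ^ (1/r) := by
            rw [← Real.rpow_mul hK0, mul_one_div_cancel hrne, Real.rpow_one]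
    -- combine with Minkowski
    have hsplit : (fun x => projE ν T f x - _root_.expect ν f)
        = fun x => h1 x + (projE ν T' f x - _root_.expect ν f) := by
      funext x
      rw [hh1]
      simp only
      ring
    rw [hsplit]
    calc pnorm ν r (fun x => h1 x + (projE ν T' f x - _root_.expect ν f))
        ≤ pnorm ν r h1 + pnorm ν r (fun x => projE ν T' f x - _root_.expect ν f) :=
          minkowski hν0 (le_of_lt hr1) h1 _
      _ ≤ K * pnorm ν r f + (S.card : ℝ) * T'.card * γ * pnorm ν r f := by
          exact add_le_add hstepC hIH2
      _ = (S.card : ℝ) * T.card * γ * pnorm ν r f := by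
          rw [hK, hT'card, Nat.cast_sub (by omega : 1 ≤ T.card)]
          ring
end MainInduction

theorem swap_walk_expansion' {d : ℕ} {Ω : Type} [Fintype Ω] [DecidableEq Ω]
    (μ : (Fin d → Ω) → ℝ) (hμ0 : ∀ x, 0 ≤ μ x) (hμ1 : ∑ x, μ x = 1)
    (q γ : ℝ) (hq : 1 < q) (hγ : 0 ≤ γ) (hX : IsQGammaProduct μ q γ)
    (S T : Finset (Fin d)) (hST : Disjoint S T)
    (f : (Fin d → Ω) → ℝ) (hf : ∀ x y, (∀ i ∈ S, x i = y i) → f x = f y) :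
    pnorm μ q (fun x => projE μ T f x - expect μ f)
        ≤ (S.card : ℝ) * T.card * γ * pnorm μ q f
    ∧ pnorm μ (q / (q - 1)) (fun x => projE μ T f x - expect μ f)
        ≤ (S.card : ℝ) * T.card * γ * pnorm μ (q / (q - 1)) f := by
  have hne : Nonempty (Fin d → Ω) := by
    by_contra hc
    rw [not_nonempty_iff] at hc
    rw [Finset.univ_eq_empty, Finset.sum_empty] at hμ1
    exact one_ne_zero hμ1.symm
  obtain ⟨z⟩ := hne
  have hcm : condMeasure μ ∅ z = μ := by
    funext y
    rw [condMeasure_eq]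
    have h1 : cwt μ ∅ z = 1 := by
      unfold cwt
      simp only [Finset.notMem_empty, false_implies, implies_true, if_true]
      exact hμ1
    rw [h1]
    simp
  have key : ∀ r : ℝ, (r = q ∨ r = q / (q - 1)) →
      pnorm μ r (fun x => projE μ T f x - _root_.expect μ f)
        ≤ (S.card : ℝ) * T.card * γ * pnorm μ r f := by
    intro r hr
    have := main_induction μ hμ0 q γ hq hγ hX
      (2 * (S.card + T.card) + 1) S T ∅ z
      (by split_ifs <;> omega) hST (Finset.disjoint_empty_left S)
      (Finset.disjoint_empty_left T) r hr f hf
    rwa [hcm] at this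
  exact ⟨key q (Or.inl rfl), key (q / (q - 1)) (Or.inr rfl)⟩

/-- `q`-norm expansion of swap walks. If `X` is a `(q,γ)`-product
then for disjoint `S, T ⊆ [d]` the swap walk `A_{S,T}` (acting on functions of
the `S`-coordinates, `A_{S,T} f = E[f | x_T]`) satisfies
`‖A_{S,T} − Π_{S,T}‖_{q→q} ≤ |S||T|γ` and `‖A_{S,T} − Π_{S,T}‖_{q'→q'} ≤ |S||T|γ`,
`q' = q/(q−1)`. -/
theorem swap_walk_expansion {d : ℕ} {Ω : Type} [Fintype Ω] [DecidableEq Ω]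
    (μ : (Fin d → Ω) → ℝ) (hμ0 : ∀ x, 0 ≤ μ x) (hμ1 : ∑ x, μ x = 1)
    (q γ : ℝ) (hq : 1 < q) (hγ : 0 ≤ γ) (hX : IsQGammaProduct μ q γ)
    (S T : Finset (Fin d)) (hST : Disjoint S T)
    (f : (Fin d → Ω) → ℝ) (hf : ∀ x y, (∀ i ∈ S, x i = y i) → f x = f y) :
    pnorm μ q (fun x => projE μ T f x - expect μ f)
        ≤ (S.card : ℝ) * T.card * γ * pnorm μ q f
    ∧ pnorm μ (q / (q - 1)) (fun x => projE μ T f x - expect μ f)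
        ≤ (S.card : ℝ) * T.card * γ * pnorm μ (q / (q - 1)) f := by
  exact swap_walk_expansion' μ hμ0 hμ1 q γ hq hγ hX S T hST f hf
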